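/- Let 0 < α < 1, 0 ≤ μ ≤ 1, λ > 0, and set β = α + μ(1−α). For γ > 0 define the Riemann–Liouville integral (I^γ g)(t) = (1/Γ(γ)) ∫_0^t (t−s)^{γ−1} g(s) ds, and set I^0 g = g. Define f(t) = ∑_{j=0}^∞ (−λ)^j t^{αj+β−1} / Γ(αj + β) for t > 0. Then for every t > 0, the Hilfer fractional derivative of f of order α and type μ satisfies (I^{μ(1−α)} ( d/ds [ (I^{(1−μ)(1−α)} f)(s) ] ))(t) = −λ f(t). -/

import Mathlib

open Real Set intervalIntegral

/-- The Riemann–Liouville fractional integral of order `γ ≥ 0`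
(with the convention `I^0 g = g`). -/
noncomputable def riemannLiouville (γ : ℝ) (g : ℝ → ℝ) (t : ℝ) : ℝ :=
  if γ = 0 then g t
  else (1 / Real.Gamma γ) * ∫ s in (0 : ℝ)..t, (t - s) ^ (γ - 1) * g s

section aux
open MeasureTheory Filter Nat

lemma gamma_eventually_ge {α c : ℝ} (hα : 0 < α) (hc : 0 < c) {M : ℝ} (hM : 1 ≤ M) :
    ∀ᶠ j : ℕ in atTop, M ^ j ≤ Real.Gamma (α * j + c) := by
  set K : ℝ := M ^ (2 / α) with hK
  have hK1 : 1 ≤ K := Real.one_le_rpow hM (by positivity)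
  have hKpos : 0 < K := lt_of_lt_of_le one_pos hK1
  -- eventually K^n ≤ n!
  have h1 : ∀ᶠ n : ℕ in atTop, K ^ n ≤ (n ! : ℝ) := by
    have := (Real.summable_pow_div_factorial K).tendsto_atTop_zero
    have h2 := this.eventually_le_const (by norm_num : (0:ℝ) < 1)
    filter_upwards [h2] with n hn
    have hfac : (0:ℝ) < n ! := by positivity
    rw [div_le_one hfac] at hn
    exact hn
  obtain ⟨N0, hN0⟩ := h1.exists_forall_of_atTop
  -- choose j large
  have hev : ∀ᶠ j : ℕ in atTop, (N0 + 3 : ℝ) ≤ α * j ∧ (4 / α : ℝ) ≤ j := by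
    have t1 : Tendsto (fun j : ℕ => α * j) atTop atTop :=
      Tendsto.const_mul_atTop hα tendsto_natCast_atTop_atTop
    exact (t1.eventually_ge_atTop _).and (tendsto_natCast_atTop_atTop.eventually_ge_atTop _)
  filter_upwards [hev] with j ⟨hj1, hj2⟩
  set x := α * j + c with hx
  have hx3 : (3:ℝ) ≤ x := by nlinarith [hc]
  set n : ℕ := ⌊x⌋₊ with hn
  have hn_le : (n : ℝ) ≤ x := Nat.floor_le (by linarith)
  have hx_lt : x < n + 1 := Nat.lt_floor_add_one x
  have hn3 : 3 ≤ n := Nat.le_floor hx3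
  have hn1 : 1 ≤ n := by omega
  -- Γ x ≥ Γ n = (n-1)!
  have hΓ1 : Real.Gamma n ≤ Real.Gamma x := by
    rcases eq_or_lt_of_le hn_le with h | h
    · rw [h]
    · exact le_of_lt (Real.Gamma_strictMonoOn_Ici (by exact_mod_cast by omega : (2:ℝ) ≤ (n:ℝ))
        (by linarith : (2:ℝ) ≤ x) h)
  have hΓn : Real.Gamma n = (n - 1)! := by
    have : (n : ℝ) = ((n - 1 : ℕ) : ℝ) + 1 := by
      rw [Nat.cast_sub hn1]; push_cast; ring
    rw [this, Real.Gamma_nat_eq_factorial]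
  -- (n-1)! ≥ K^(n-1)
  have hn1N : N0 ≤ n - 1 := by
    have : (N0 + 2 : ℝ) < n := by
      have := hx_lt
      nlinarith [hj1, hc]
    have : N0 + 2 < n := by exact_mod_cast this
    omega
  have h3 : K ^ (n - 1) ≤ ((n-1)! : ℝ) := hN0 _ hn1N
  -- K^(n-1) ≥ K^(αj - 2) ≥ M^j
  have hcast : ((n - 1 : ℕ) : ℝ) = (n : ℝ) - 1 := by
    push_cast [Nat.cast_sub hn1]; ring
  have h4 : K ^ ((α * j - 2 : ℝ)) ≤ K ^ (n - 1 : ℕ) := by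
    rw [← Real.rpow_natCast K (n-1), hcast]
    apply Real.rpow_le_rpow_of_exponent_le hK1
    nlinarith [hx_lt, hc]
  have h5 : (M:ℝ) ^ (j:ℝ) ≤ K ^ ((α * j - 2 : ℝ)) := by
    rw [hK, ← Real.rpow_mul (by linarith : (0:ℝ) ≤ M)]
    apply Real.rpow_le_rpow_of_exponent_le hM
    have key : 2 / α * (α * (j:ℝ) - 2) = 2 * (j:ℝ) - 4 / α := by
      field_simp; ring
    rw [key]
    have h4α : 4 / α ≤ (j:ℝ) := hj2
    linarith
  calc M ^ j = M ^ (j:ℝ) := (Real.rpow_natCast M j).symm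
    _ ≤ K ^ ((α * j - 2 : ℝ)) := h5
    _ ≤ K ^ (n - 1 : ℕ) := h4
    _ ≤ ((n-1)! : ℝ) := h3
    _ = Real.Gamma n := hΓn.symm
    _ ≤ Real.Gamma x := hΓ1

lemma summable_aux {α c : ℝ} (hα : 0 < α) (hc : 0 < c) {x : ℝ} (hx : 0 ≤ x) :
    Summable (fun j : ℕ => x ^ j / Real.Gamma (α * j + c)) := by
  set M : ℝ := x + 2 with hM
  have hM1 : 1 ≤ M := by linarith
  have hgeo : Summable (fun j : ℕ => (x / M) ^ j) :=
    summable_geometric_of_lt_one (by positivity) (by rw [div_lt_one (by linarith)]; linarith)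
  apply summable_of_isBigO_nat hgeo
  rw [Asymptotics.isBigO_iff]
  refine ⟨1, ?_⟩
  filter_upwards [gamma_eventually_ge hα hc hM1] with j hj
  have hΓpos : 0 < Real.Gamma (α * j + c) := Real.Gamma_pos_of_pos (by positivity)
  have hMj : (0:ℝ) < M ^ j := by positivity
  rw [Real.norm_eq_abs, Real.norm_eq_abs, abs_of_nonneg (by positivity),
    abs_of_nonneg (by positivity), one_mul, div_pow]
  gcongr

lemma beta_aux {p q t : ℝ} (hp : 0 < p) (hq : 0 < q) (ht : 0 < t) :
    IntegrableOn (fun s => (t - s) ^ (p - 1) * s ^ (q - 1)) (Ioc 0 t) volume ∧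
    ∫ s in Ioc (0:ℝ) t, (t - s) ^ (p - 1) * s ^ (q - 1) =
      Real.Gamma p * Real.Gamma q / Real.Gamma (p + q) * t ^ (p + q - 1) := by
  set G : ℝ → ℂ := fun s => (s:ℂ) ^ ((q:ℂ) - 1) * ((t:ℂ) - s) ^ ((p:ℂ) - 1) with hG
  have hval : ∫ s in (0:ℝ)..t, G s = (t:ℂ) ^ ((q:ℂ) + p - 1) * Complex.betaIntegral q p :=
    Complex.betaIntegral_scaled q p ht
  have hΓq : Complex.Gamma q = (Real.Gamma q : ℂ) := Complex.Gamma_ofReal q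
  have hΓp : Complex.Gamma p = (Real.Gamma p : ℂ) := Complex.Gamma_ofReal p
  have hΓqp : Complex.Gamma ((q:ℂ) + p) = (Real.Gamma (q + p) : ℂ) := by
    rw [← Complex.ofReal_add, Complex.Gamma_ofReal]
  have hΓqp_ne : Complex.Gamma ((q:ℂ) + p) ≠ 0 := by
    rw [hΓqp]
    exact_mod_cast (Real.Gamma_pos_of_pos (by linarith)).ne'
  have hbeta : Complex.betaIntegral q p =
      Complex.Gamma q * Complex.Gamma p / Complex.Gamma ((q:ℂ) + p) := by
    rw [eq_div_iff hΓqp_ne, mul_comm]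
    exact (Complex.Gamma_mul_Gamma_eq_betaIntegral (by simpa using hq) (by simpa using hp)).symm
  have hRHS_ne : (t:ℂ) ^ ((q:ℂ) + p - 1) * Complex.betaIntegral q p ≠ 0 := by
    apply mul_ne_zero
    · simp only [ne_eq, Complex.cpow_eq_zero_iff, not_and_or, not_not]
      left
      exact_mod_cast ht.ne'
    · rw [hbeta]
      apply div_ne_zero (mul_ne_zero ?_ ?_) hΓqp_ne
      · rw [hΓq]; exact_mod_cast (Real.Gamma_pos_of_pos hq).ne'
      · rw [hΓp]; exact_mod_cast (Real.Gamma_pos_of_pos hp).ne'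
  have hGint : IntervalIntegrable G volume 0 t := by
    by_contra h
    rw [intervalIntegral.integral_undef h] at hval
    exact hRHS_ne hval.symm
  have hcongr : EqOn (fun s : ℝ => (((t - s) ^ (p - 1) * s ^ (q - 1) : ℝ) : ℂ)) G (uIcc 0 t) := by
    intro s hs
    rw [uIcc_of_le ht.le] at hs
    simp only [hG, Complex.ofReal_mul]
    rw [Complex.ofReal_cpow (by linarith [hs.2] : (0:ℝ) ≤ t - s) (p - 1),
      Complex.ofReal_cpow hs.1 (q - 1)]
    push_cast
    ring
  have hint : IntegrableOn (fun s => (t - s) ^ (p - 1) * s ^ (q - 1)) (Ioc 0 t) volume := by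
    have h1 : IntegrableOn G (Ioc 0 t) volume :=
      (intervalIntegrable_iff_integrableOn_Ioc_of_le ht.le).mp hGint
    have h2 : IntegrableOn (fun s : ℝ => (((t - s) ^ (p - 1) * s ^ (q - 1) : ℝ) : ℂ))
        (Ioc 0 t) volume := by
      apply h1.congr_fun ?_ measurableSet_Ioc
      intro s hs
      exact (hcongr (by rw [uIcc_of_le ht.le]; exact Ioc_subset_Icc_self hs)).symm
    have h3 := h2.re
    have h4 : Integrable (fun x => (t - x) ^ (p - 1) * x ^ (q - 1)) (volume.restrict (Ioc 0 t)) := by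
      simpa using h3
    exact h4
  refine ⟨hint, ?_⟩
  have hval2 : ((∫ s in (0:ℝ)..t, (t - s) ^ (p - 1) * s ^ (q - 1) : ℝ) : ℂ) =
      (t:ℂ) ^ ((q:ℂ) + p - 1) * Complex.betaIntegral q p := by
    rw [← intervalIntegral.integral_ofReal, intervalIntegral.integral_congr hcongr, hval]
  rw [hbeta, hΓq, hΓp, hΓqp] at hval2
  have hpow : (t:ℂ) ^ ((q:ℂ) + p - 1) = ((t ^ (q + p - 1) : ℝ) : ℂ) := by
    rw [Complex.ofReal_cpow ht.le]
    push_cast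
    ring_nf
  rw [hpow] at hval2
  have : (∫ s in (0:ℝ)..t, (t - s) ^ (p - 1) * s ^ (q - 1) : ℝ) =
      t ^ (q + p - 1) * (Real.Gamma q * Real.Gamma p / Real.Gamma (q + p)) := by
    have := hval2
    rw [← Complex.ofReal_mul, ← Complex.ofReal_div, ← Complex.ofReal_mul] at this
    exact_mod_cast this
  rw [intervalIntegral.integral_of_le ht.le] at this
  rw [this, add_comm q p]
  ring

lemma rpow_split {t : ℝ} (ht : 0 < t) (a : ℝ) (j : ℕ) (b : ℝ) :
    t ^ (a * j + b) = (t ^ a) ^ j * t ^ b := by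
  rw [Real.rpow_add ht, Real.rpow_mul ht.le, Real.rpow_natCast]

lemma summable_terms {α lam c t : ℝ} (hα : 0 < α) (hlam : 0 < lam) (hc : 0 < c) (ht : 0 < t) :
    Summable (fun j : ℕ => (-lam) ^ j * t ^ (α * j + c - 1) / Real.Gamma (α * j + c)) := by
  apply Summable.of_norm
  have heq : (fun j : ℕ => ‖(-lam) ^ j * t ^ (α * j + c - 1) / Real.Gamma (α * j + c)‖) =
      fun j : ℕ => t ^ (c - 1) * ((lam * t ^ α) ^ j / Real.Gamma (α * j + c)) := by
    funext j
    have hΓ : 0 < Real.Gamma (α * j + c) := Real.Gamma_pos_of_pos (by positivity)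
    have htj : (0:ℝ) < t ^ (α * j + c - 1) := Real.rpow_pos_of_pos ht _
    rw [Real.norm_eq_abs, abs_div, abs_mul, abs_pow, abs_neg, abs_of_pos hlam,
      abs_of_pos htj, abs_of_pos hΓ]
    have : α * j + c - 1 = α * j + (c - 1) := by ring
    rw [this, rpow_split ht, mul_pow]
    ring
  rw [heq]
  exact (summable_aux hα hc (by positivity : (0:ℝ) ≤ lam * t ^ α)).mul_left _

lemma RL_swap {α lam : ℝ} (hα : 0 < α) (hlam : 0 < lam) {γ c t : ℝ}
    (hγ : 0 < γ) (hc : 0 < c) (ht : 0 < t) :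
    (1 / Real.Gamma γ) * ∫ s in (0:ℝ)..t, (t - s) ^ (γ - 1) *
      (∑' j : ℕ, (-lam) ^ j * s ^ (α * j + c - 1) / Real.Gamma (α * j + c)) =
    ∑' j : ℕ, (-lam) ^ j * t ^ (α * j + (γ + c) - 1) / Real.Gamma (α * j + (γ + c)) := by
  have hΓγ : 0 < Real.Gamma γ := Real.Gamma_pos_of_pos hγ
  have hΓc : ∀ j : ℕ, 0 < Real.Gamma (α * j + c) :=
    fun j => Real.Gamma_pos_of_pos (by positivity)
  have hΓgc : ∀ j : ℕ, 0 < Real.Gamma (γ + (α * j + c)) :=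
    fun j => Real.Gamma_pos_of_pos (by positivity)
  set F : ℕ → ℝ → ℝ := fun j s =>
    (t - s) ^ (γ - 1) * ((-lam) ^ j * s ^ (α * j + c - 1) / Real.Gamma (α * j + c)) with hF
  have hFconst : ∀ j : ℕ, F j = fun s =>
      ((-lam) ^ j / Real.Gamma (α * j + c)) * ((t - s) ^ (γ - 1) * s ^ (α * j + c - 1)) := by
    intro j; funext s; simp only [hF]; ring
  have hFint : ∀ j : ℕ, IntegrableOn (F j) (Ioc 0 t) volume := by
    intro j
    rw [hFconst j]
    exact ((beta_aux hγ (by positivity : (0:ℝ) < α * j + c) ht).1).const_mul _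
  have hFnorm : ∀ j : ℕ, ∫ s in Ioc (0:ℝ) t, ‖F j s‖ =
      (lam ^ j / Real.Gamma (α * j + c)) *
        (Real.Gamma γ * Real.Gamma (α * j + c) / Real.Gamma (γ + (α * j + c)) *
          t ^ (γ + (α * j + c) - 1)) := by
    intro j
    have : ∀ s ∈ Ioc (0:ℝ) t, ‖F j s‖ =
        (lam ^ j / Real.Gamma (α * j + c)) * ((t - s) ^ (γ - 1) * s ^ (α * j + c - 1)) := by
      intro s hs
      have h1 : (0:ℝ) ≤ (t - s) ^ (γ - 1) := Real.rpow_nonneg (by linarith [hs.2]) _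
      have h2 : (0:ℝ) < s ^ (α * j + c - 1) := Real.rpow_pos_of_pos hs.1 _
      simp only [hF]
      rw [Real.norm_eq_abs, abs_mul, abs_of_nonneg h1, abs_div, abs_mul, abs_pow, abs_neg,
        abs_of_pos hlam, abs_of_pos h2, abs_of_pos (hΓc j)]
      ring
    rw [setIntegral_congr_fun measurableSet_Ioc this]
    rw [MeasureTheory.integral_const_mul, (beta_aux hγ (by positivity : (0:ℝ) < α * j + c) ht).2]
  have hsum_norm : Summable (fun j : ℕ => ∫ s in Ioc (0:ℝ) t, ‖F j s‖) := by
    have heq : (fun j : ℕ => ∫ s in Ioc (0:ℝ) t, ‖F j s‖) =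
        fun j : ℕ => (Real.Gamma γ * t ^ (γ + c - 1)) *
          ((lam * t ^ α) ^ j / Real.Gamma (α * j + (γ + c))) := by
      funext j
      rw [hFnorm j]
      have e1 : γ + (α * j + c) - 1 = α * (j:ℕ) + (γ + c - 1) := by ring
      have e2 : γ + (α * j + c) = α * (j:ℕ) + (γ + c) := by ring
      rw [e1, e2, rpow_split ht, mul_pow]
      field_simp
    rw [heq]
    exact ((summable_aux hα (by positivity : (0:ℝ) < γ + c)
      (by positivity : (0:ℝ) ≤ lam * t ^ α)).mul_left _)
  -- main computation
  rw [intervalIntegral.integral_of_le ht.le]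
  have hinner : ∀ s : ℝ, (t - s) ^ (γ - 1) *
      (∑' j : ℕ, (-lam) ^ j * s ^ (α * j + c - 1) / Real.Gamma (α * j + c)) =
      ∑' j : ℕ, F j s := by
    intro s
    simp only [hF]
    exact (tsum_mul_left).symm
  simp only [hinner]
  rw [← integral_tsum_of_summable_integral_norm hFint hsum_norm]
  rw [← tsum_mul_left]
  apply tsum_congr
  intro j
  have : ∫ s in Ioc (0:ℝ) t, F j s =
      ((-lam) ^ j / Real.Gamma (α * j + c)) *
        (Real.Gamma γ * Real.Gamma (α * j + c) / Real.Gamma (γ + (α * j + c)) *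
          t ^ (γ + (α * j + c) - 1)) := by
    rw [hFconst j]
    simp only [MeasureTheory.integral_const_mul]
    rw [(beta_aux hγ (by positivity : (0:ℝ) < α * j + c) ht).2]
  rw [this]
  have e1 : γ + (α * j + c) - 1 = α * (j:ℕ) + (γ + c) - 1 := by ring
  have e2 : γ + (α * j + c) = α * (j:ℕ) + (γ + c) := by ring
  rw [e1, e2]
  field_simp

lemma rpow_mul_nat {t : ℝ} (ht : 0 ≤ t) (a : ℝ) (j : ℕ) : t ^ (a * j) = (t ^ a) ^ j := by
  rw [Real.rpow_mul ht, Real.rpow_natCast]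

lemma hasDerivAt_S1 {α lam : ℝ} (hα0 : 0 < α) (hlam : 0 < lam) {y : ℝ} (hy : 0 < y) :
    HasDerivAt (fun s : ℝ => ∑' j : ℕ, (-lam) ^ j * s ^ (α * j + 1 - 1) / Real.Gamma (α * j + 1))
      (-lam * ∑' j : ℕ, (-lam) ^ j * y ^ (α * j + α - 1) / Real.Gamma (α * j + α)) y := by
  set x : ℝ := lam * (2 * y) ^ α with hx
  have hxpos : 0 < x := by positivity
  set u : ℕ → ℝ := fun j => if j = 0 then 0 else (2 / y) * (x ^ j / Real.Gamma (α * j)) with hu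
  set g : ℕ → ℝ → ℝ :=
    fun j s => (-lam) ^ j * s ^ (α * j + 1 - 1) / Real.Gamma (α * j + 1) with hg
  set g' : ℕ → ℝ → ℝ := fun j z =>
    (-lam) ^ j * ((α * j + 1 - 1) * z ^ (α * j + 1 - 1 - 1)) / Real.Gamma (α * j + 1) with hg'
  have hu_summable : Summable u := by
    apply (summable_nat_add_iff 1).1
    have heq : (fun k : ℕ => u (k + 1)) =
        fun k : ℕ => ((2 / y) * x) * (x ^ k / Real.Gamma (α * k + α)) := by
      funext k
      simp only [hu, Nat.succ_ne_zero, if_false]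
      have : α * ((k : ℕ) + 1 : ℕ) = α * k + α := by push_cast; ring
      rw [this, pow_succ]
      ring
    rw [heq]
    exact (summable_aux hα0 hα0 hxpos.le).mul_left _
  have hyy : y ∈ Ioo (y / 2) (2 * y) := ⟨by linarith, by linarith⟩
  have hderiv : ∀ (j : ℕ), ∀ z ∈ Ioo (y / 2) (2 * y), HasDerivAt (g j) (g' j z) z := by
    intro j z hz
    have hz0 : 0 < z := lt_trans (by linarith) hz.1
    have h1 : HasDerivAt (fun s : ℝ => s ^ (α * j + 1 - 1))
        ((α * j + 1 - 1) * z ^ (α * j + 1 - 1 - 1)) z :=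
      Real.hasDerivAt_rpow_const (Or.inl hz0.ne')
    exact (h1.const_mul ((-lam) ^ j)).div_const _
  have hbound : ∀ (j : ℕ), ∀ z ∈ Ioo (y / 2) (2 * y), ‖g' j z‖ ≤ u j := by
    intro j z hz
    have hz0 : 0 < z := lt_trans (by linarith) hz.1
    rcases Nat.eq_zero_or_pos j with rfl | hj
    · simp [hg', hu]
    · have hαj : 0 < α * j := by positivity
      have hΓ : 0 < Real.Gamma (α * j) := Real.Gamma_pos_of_pos hαj
      have hΓ1 : Real.Gamma (α * j + 1) = (α * j) * Real.Gamma (α * j) :=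
        Real.Gamma_add_one hαj.ne'
      have e2 : α * (j:ℕ) + 1 - 1 - 1 = α * j - 1 := by ring
      have e1 : α * (j:ℕ) + 1 - 1 = α * j := by ring
      simp only [hg']
      rw [Real.norm_eq_abs, e2, e1, hΓ1]
      have hzpow : 0 < z ^ (α * (j:ℕ) - 1) := Real.rpow_pos_of_pos hz0 _
      rw [abs_div, abs_mul, abs_pow, abs_neg, abs_of_pos hlam, abs_mul,
        abs_of_pos hαj, abs_of_pos hzpow,
        abs_of_pos (by positivity : 0 < α * (j:ℕ) * Real.Gamma (α * j))]
      have hcancel : lam ^ j * (α * (j:ℕ) * z ^ (α * (j:ℕ) - 1)) / (α * (j:ℕ) * Real.Gamma (α * j))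
          = lam ^ j * z ^ (α * (j:ℕ) - 1) / Real.Gamma (α * j) := by
        field_simp
      rw [hcancel]
      have hzb : z ^ (α * (j:ℕ) - 1) ≤ (2 / y) * (2 * y) ^ (α * (j:ℕ)) := by
        have h3 : z ^ (α * (j:ℕ) - 1) = z ^ (α * (j:ℕ)) / z := by
          rw [Real.rpow_sub hz0, Real.rpow_one]
        rw [h3]
        have h4 : z ^ (α * (j:ℕ)) ≤ (2 * y) ^ (α * (j:ℕ)) :=
          Real.rpow_le_rpow hz0.le hz.2.le (by positivity)
        have h5 : z ^ (α * (j:ℕ)) / z ≤ (2 * y) ^ (α * (j:ℕ)) / (y / 2) :=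
          div_le_div₀ (by positivity) h4 (by linarith) (le_of_lt hz.1)
        calc z ^ (α * (j:ℕ)) / z ≤ (2 * y) ^ (α * (j:ℕ)) / (y / 2) := h5
          _ = (2 / y) * (2 * y) ^ (α * (j:ℕ)) := by ring
      have hfinal : lam ^ j * z ^ (α * (j:ℕ) - 1) / Real.Gamma (α * j)
          ≤ lam ^ j * ((2 / y) * (2 * y) ^ (α * (j:ℕ))) / Real.Gamma (α * j) := by
        gcongr
      refine le_trans hfinal (le_of_eq ?_)
      simp only [hu, Nat.pos_iff_ne_zero.mp hj, if_false]
      rw [hx, mul_pow, rpow_mul_nat (by positivity : (0:ℝ) ≤ 2 * y)]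
      ring
  have key := hasDerivAt_tsum_of_isPreconnected hu_summable isOpen_Ioo isPreconnected_Ioo
    hderiv hbound hyy (by simpa only [hg] using summable_terms hα0 hlam one_pos hy) hyy
  have hsum_g' : Summable (fun j : ℕ => g' j y) :=
    Summable.of_norm_bounded hu_summable (fun j => hbound j y hyy)
  have hval : (∑' j : ℕ, g' j y) =
      -lam * ∑' j : ℕ, (-lam) ^ j * y ^ (α * j + α - 1) / Real.Gamma (α * j + α) := by
    rw [Summable.tsum_eq_zero_add hsum_g']
    have h0 : g' 0 y = 0 := by
      simp only [hg']
      norm_num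
    rw [h0, zero_add, ← tsum_mul_left]
    apply tsum_congr
    intro k
    have hαk : 0 < α * k + α := by positivity
    have hΓ1 : Real.Gamma ((α * k + α) + 1) = (α * k + α) * Real.Gamma (α * k + α) :=
      Real.Gamma_add_one hαk.ne'
    have e0 : α * ((k:ℕ) + 1 : ℕ) = α * k + α := by push_cast; ring
    have e2 : α * ((k:ℕ) + 1 : ℕ) + 1 - 1 - 1 = α * k + α - 1 := by rw [e0]; ring
    have e1 : α * ((k:ℕ) + 1 : ℕ) + 1 - 1 = α * k + α := by rw [e0]; ring
    have e3 : α * ((k:ℕ) + 1 : ℕ) + 1 = (α * k + α) + 1 := by rw [e0]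
    simp only [hg']
    rw [e2, e1, e3, hΓ1, pow_succ]
    have hΓpos : 0 < Real.Gamma (α * k + α) := Real.Gamma_pos_of_pos hαk
    field_simp
  rw [hval] at key
  exact key

end aux

open MeasureTheory in
/-- The function `f(t) = Γ(β) t^{β-1} E_{α,β}(-λ t^α)`, `β = α + μ(1-α)`, is an
eigenfunction of the Hilfer fractional derivative of order `α` and type `μ`:
`D^{α,μ}_{0t} f = I^{μ(1-α)} (d/dt) I^{(1-μ)(1-α)} f = -λ f` on `(0,∞)`. -/

theorem hilfer_eigenfunction
    (α μ lam β : ℝ) (hα0 : 0 < α) (hα1 : α < 1) (hμ0 : 0 ≤ μ) (hμ1 : μ ≤ 1)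
    (hlam : 0 < lam) (hβ : β = α + μ * (1 - α))
    (f : ℝ → ℝ)
    (hf : ∀ t : ℝ, 0 < t →
      f t = ∑' j : ℕ, (-lam) ^ j * t ^ (α * j + β - 1) / Real.Gamma (α * j + β)) :
    ∀ t : ℝ, 0 < t →
      riemannLiouville (μ * (1 - α))
        (fun s => deriv (riemannLiouville ((1 - μ) * (1 - α)) f) s) t = -lam * f t := by
  intro t ht
  have hβpos : 0 < β := by nlinarith
  have stepA : ∀ s : ℝ, 0 < s → riemannLiouville ((1 - μ) * (1 - α)) f s =
      ∑' j : ℕ, (-lam) ^ j * s ^ (α * j + 1 - 1) / Real.Gamma (α * j + 1) := by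
    intro s hs
    by_cases hμ : μ = 1
    · subst hμ
      have h0 : (1 - (1:ℝ)) * (1 - α) = 0 := by ring
      simp only [riemannLiouville, if_pos h0]
      rw [hf s hs]
      have hβ1' : β = 1 := by rw [hβ]; ring
      rw [hβ1']
    · have hμ1' : μ < 1 := lt_of_le_of_ne hμ1 hμ
      have hγpos : 0 < (1 - μ) * (1 - α) := by nlinarith
      simp only [riemannLiouville, if_neg hγpos.ne']
      have hcongr : (∫ x in (0:ℝ)..s, (s - x) ^ ((1 - μ) * (1 - α) - 1) * f x)
          = ∫ x in (0:ℝ)..s, (s - x) ^ ((1 - μ) * (1 - α) - 1) *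
            (∑' j : ℕ, (-lam) ^ j * x ^ (α * j + β - 1) / Real.Gamma (α * j + β)) := by
        rw [intervalIntegral.integral_of_le hs.le, intervalIntegral.integral_of_le hs.le]
        apply setIntegral_congr_fun measurableSet_Ioc
        intro x hx
        dsimp only
        rw [hf x hx.1]
      rw [hcongr, RL_swap hα0 hlam hγpos hβpos hs]
      have hone : (1 - μ) * (1 - α) + β = 1 := by rw [hβ]; ring
      rw [hone]
  have stepB : ∀ s : ℝ, 0 < s → deriv (riemannLiouville ((1 - μ) * (1 - α)) f) s =
      -lam * ∑' j : ℕ, (-lam) ^ j * s ^ (α * j + α - 1) / Real.Gamma (α * j + α) := by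
    intro s hs
    have hev : riemannLiouville ((1 - μ) * (1 - α)) f =ᶠ[nhds s]
        (fun z : ℝ => ∑' j : ℕ, (-lam) ^ j * z ^ (α * j + 1 - 1) / Real.Gamma (α * j + 1)) := by
      filter_upwards [Ioi_mem_nhds hs] with z hz
      exact stepA z hz
    rw [hev.deriv_eq]
    exact (hasDerivAt_S1 hα0 hlam hs).deriv
  by_cases hμz : μ = 0
  · subst hμz
    have h0 : (0:ℝ) * (1 - α) = 0 := by ring
    simp only [riemannLiouville, if_pos h0]
    rw [stepB t ht, hf t ht]
    have hβα : β = α := by rw [hβ]; ring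
    rw [hβα]
  · have hδpos : 0 < μ * (1 - α) := by
      have hμpos : 0 < μ := lt_of_le_of_ne hμ0 (Ne.symm hμz)
      nlinarith
    simp only [riemannLiouville, if_neg hδpos.ne']
    have hcongr : (∫ x in (0:ℝ)..t, (t - x) ^ (μ * (1 - α) - 1) *
          deriv (riemannLiouville ((1 - μ) * (1 - α)) f) x)
        = ∫ x in (0:ℝ)..t, -lam * ((t - x) ^ (μ * (1 - α) - 1) *
            (∑' j : ℕ, (-lam) ^ j * x ^ (α * j + α - 1) / Real.Gamma (α * j + α))) := by
      rw [intervalIntegral.integral_of_le ht.le, intervalIntegral.integral_of_le ht.le]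
      apply setIntegral_congr_fun measurableSet_Ioc
      intro x hx
      dsimp only
      rw [stepB x hx.1]
      ring
    rw [hcongr, intervalIntegral.integral_const_mul]
    have hgoal : 1 / Real.Gamma (μ * (1 - α)) *
        (-lam * ∫ x in (0:ℝ)..t, (t - x) ^ (μ * (1 - α) - 1) *
          (∑' j : ℕ, (-lam) ^ j * x ^ (α * j + α - 1) / Real.Gamma (α * j + α)))
        = -lam * (1 / Real.Gamma (μ * (1 - α)) *
          ∫ x in (0:ℝ)..t, (t - x) ^ (μ * (1 - α) - 1) *
            (∑' j : ℕ, (-lam) ^ j * x ^ (α * j + α - 1) / Real.Gamma (α * j + α))) := by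
      ring
    rw [hgoal, RL_swap hα0 hlam hδpos hα0 ht, hf t ht]
    have hβδ : μ * (1 - α) + α = β := by rw [hβ]; ring
    rw [hβδ]
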